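/- Let t* ∈ (π/2, π) be the unique zero of t ↦ W(−t,t). Then the function t ↦ β(0,t) (the terminal chord angle of R restricted to [0,t]) is strictly increasing on (0, t*], strictly decreasing on [t*, π], and satisfies β(0, t*) > π/2 and β(0, π) = π/2. Consequently there exists a unique t̄ ∈ (0, t*) with β(0, t̄) = π/2, with β(0,t) < π/2 for 0 < t < t̄ and β(0,t) > π/2 for t̄ < t < π. -/

import Mathlib

open Real Complex Set

noncomputable def xi (t : ℝ) : ℝ :=
  ∫ τ in (0:ℝ)..t, Real.sin τ ^ 2 / Real.sqrt (1 + Real.sin τ ^ 2)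

noncomputable def R (t : ℝ) : ℂ := (Real.sin t : ℂ) + Complex.I * (xi t : ℂ)

noncomputable def betaAng (t₁ t₂ : ℝ) : ℝ := Complex.arg (deriv R t₂ / (R t₂ - R t₁))

noncomputable def W (t₁ t₂ : ℝ) : ℝ :=
  2 * (xi t₂ - xi t₁) + (Real.sin t₂ - Real.sin t₁) ^ 2 / (xi t₂ - xi t₁)
    + Real.cos t₂ * Real.sqrt (1 + Real.sin t₂ ^ 2) / Real.sin t₂
    - Real.cos t₁ * Real.sqrt (1 + Real.sin t₁ ^ 2) / Real.sin t₁

noncomputable def rr (t : ℝ) : ℝ := Real.sqrt (1 + Real.sin t ^ 2)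

noncomputable def gg (t : ℝ) : ℝ := Real.sin t ^ 2 / rr t

lemma rr_pos (t : ℝ) : 0 < rr t := Real.sqrt_pos.2 (by positivity)

lemma rr_sq (t : ℝ) : rr t ^ 2 = 1 + Real.sin t ^ 2 := Real.sq_sqrt (by positivity)

lemma rr_cont : Continuous rr :=
  (continuous_const.add ((Real.continuous_sin).pow 2)).sqrt

lemma gg_cont : Continuous gg :=
  ((Real.continuous_sin).pow 2).div rr_cont (fun t => (rr_pos t).ne')

lemma gg_nonneg (t : ℝ) : 0 ≤ gg t := by
  unfold gg
  exact div_nonneg (sq_nonneg _) (rr_pos t).le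

lemma hasDerivAt_xi (t : ℝ) : HasDerivAt xi (gg t) t := by
  have h : HasDerivAt (fun u => ∫ τ in (0:ℝ)..u, Real.sin τ ^ 2 / Real.sqrt (1 + Real.sin τ ^ 2))
      (Real.sin t ^ 2 / Real.sqrt (1 + Real.sin t ^ 2)) t := by
    apply intervalIntegral.integral_hasDerivAt_right
    · exact (gg_cont.intervalIntegrable 0 t)
    · exact gg_cont.aestronglyMeasurable.stronglyMeasurableAtFilter
    · exact gg_cont.continuousAt
  exact h

lemma xi_zero : xi 0 = 0 := intervalIntegral.integral_same

lemma xi_neg (t : ℝ) : xi (-t) = - xi t := by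
  unfold xi
  have h := intervalIntegral.integral_comp_neg (a := (0:ℝ)) (b := t)
    (f := fun τ => Real.sin τ ^ 2 / Real.sqrt (1 + Real.sin τ ^ 2))
  simp only [neg_zero] at h
  have key : (∫ τ in (0:ℝ)..t, Real.sin τ ^ 2 / Real.sqrt (1 + Real.sin τ ^ 2))
      = ∫ τ in (-t:ℝ)..0, Real.sin τ ^ 2 / Real.sqrt (1 + Real.sin τ ^ 2) := by
    rw [← h]
    simp [Real.sin_neg, neg_sq]
  rw [intervalIntegral.integral_symm, ← key]

lemma xi_pos {t : ℝ} (h0 : 0 < t) (hpi : t ≤ π) : 0 < xi t := by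
  apply intervalIntegral.intervalIntegral_pos_of_pos_on (gg_cont.intervalIntegrable 0 t) _ h0
  intro x hx
  have hs : 0 < Real.sin x := Real.sin_pos_of_pos_of_lt_pi hx.1 (lt_of_lt_of_le hx.2 hpi)
  unfold gg rr
  positivity

lemma R_zero : R 0 = 0 := by simp [R, xi_zero]

lemma hasDerivAt_R (t : ℝ) : HasDerivAt R ((Real.cos t : ℂ) + Complex.I * (gg t : ℂ)) t := by
  have h1 : HasDerivAt (fun u : ℝ => (Real.sin u : ℂ)) (Real.cos t : ℂ) t :=
    (Real.hasDerivAt_sin t).ofReal_comp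
  have h2 : HasDerivAt (fun u : ℝ => (xi u : ℂ)) (gg t : ℂ) t :=
    (hasDerivAt_xi t).ofReal_comp
  exact h1.add (h2.const_mul Complex.I)

lemma deriv_R (t : ℝ) : deriv R t = (Real.cos t : ℂ) + Complex.I * (gg t : ℂ) :=
  (hasDerivAt_R t).deriv

noncomputable def ggd (t : ℝ) : ℝ :=
  Real.sin t * Real.cos t * (2 + Real.sin t ^ 2) / rr t ^ 3

lemma hasDerivAt_rr (t : ℝ) :
    HasDerivAt rr (Real.sin t * Real.cos t / rr t) t := by
  have h1 : HasDerivAt (fun u => 1 + Real.sin u ^ 2)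
      (2 * Real.sin t * Real.cos t) t := by
    have := ((Real.hasDerivAt_sin t).pow 2).const_add 1
    refine this.congr_deriv ?_
    ring
  have := h1.sqrt (by positivity)
  refine this.congr_deriv ?_
  symm
  unfold rr
  field_simp

lemma hasDerivAt_gg (t : ℝ) : HasDerivAt gg (ggd t) t := by
  have h1 : HasDerivAt (fun u => Real.sin u ^ 2) (2 * Real.sin t * Real.cos t) t := by
    have := (Real.hasDerivAt_sin t).pow 2
    refine this.congr_deriv ?_; ring
  have h := h1.div (hasDerivAt_rr t) (rr_pos t).ne'
  refine h.congr_deriv ?_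
  symm
  unfold ggd
  have hr := rr_sq t
  have hr0 := (rr_pos t).ne'
  field_simp
  linear_combination (-2*Real.sin t*Real.cos t*rr t^3) * hr
    + ((-2)*Real.sin t*Real.cos t + (2)*Real.sin t*Real.cos t*rr t^3) * hr

lemma arg_upper (z : ℂ) (hz : 0 < z.im) :
    Complex.arg z = π/2 - Real.arctan (z.re / z.im) := by
  have hz0 : z ≠ 0 := fun h => by simp [h] at hz
  have habs : (0:ℝ) < ‖z‖ := norm_pos_iff.mpr hz0
  have hsin : Real.sin (Complex.arg z) = z.im / ‖z‖ := Complex.sin_arg z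
  have hcos : Real.cos (Complex.arg z) = z.re / ‖z‖ := Complex.cos_arg hz0
  have h2 : Complex.arg z < π := Complex.arg_lt_pi_iff.2 (Or.inr hz.ne')
  have h1 : 0 < Complex.arg z := by
    by_contra hle
    push_neg at hle
    have := Real.sin_nonpos_of_nonpos_of_neg_pi_le hle (Complex.neg_pi_lt_arg z).le
    rw [hsin] at this
    have : (0:ℝ) < z.im / ‖z‖ := div_pos hz habs
    linarith
  have htan : Real.tan (π/2 - Complex.arg z) = z.re / z.im := by
    rw [Real.tan_eq_sin_div_cos, Real.sin_pi_div_two_sub, Real.cos_pi_div_two_sub, hsin, hcos]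
    field_simp
  rw [← htan, Real.arctan_tan (by linarith) (by linarith)]
  ring

noncomputable def AA (t : ℝ) : ℝ := Real.cos t * Real.sin t + gg t * xi t

noncomputable def BB (t : ℝ) : ℝ := gg t * Real.sin t - xi t * Real.cos t

lemma hasDerivAt_AA (t : ℝ) : HasDerivAt AA
    (Real.cos t ^ 2 - Real.sin t ^ 2 + ggd t * xi t + gg t ^ 2) t := by
  have h1 : HasDerivAt (fun u => Real.cos u * Real.sin u)
      (Real.cos t ^ 2 - Real.sin t ^ 2) t := by
    have := (Real.hasDerivAt_cos t).mul (Real.hasDerivAt_sin t)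
    refine this.congr_deriv ?_; ring
  have h2 : HasDerivAt (fun u => gg u * xi u) (ggd t * xi t + gg t ^ 2) t := by
    have := (hasDerivAt_gg t).mul (hasDerivAt_xi t)
    refine this.congr_deriv ?_; ring
  have := h1.add h2
  refine this.congr_deriv ?_
  ring

lemma hasDerivAt_BB (t : ℝ) : HasDerivAt BB (Real.sin t * (ggd t + xi t)) t := by
  have h1 : HasDerivAt (fun u => gg u * Real.sin u)
      (ggd t * Real.sin t + gg t * Real.cos t) t :=
    (hasDerivAt_gg t).mul (Real.hasDerivAt_sin t)
  have h2 : HasDerivAt (fun u => xi u * Real.cos u)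
      (gg t * Real.cos t - xi t * Real.sin t) t := by
    have := (hasDerivAt_xi t).mul (Real.hasDerivAt_cos t)
    refine this.congr_deriv ?_; ring
  have := h1.sub h2
  refine this.congr_deriv ?_
  ring

lemma BB_zero : BB 0 = 0 := by simp [BB, xi_zero]

lemma xi_cont : Continuous xi :=
  continuous_iff_continuousAt.2 fun u => (hasDerivAt_xi u).differentiableAt.continuousAt

lemma ggd_nonneg {t : ℝ} (hs : 0 ≤ Real.sin t) (hc : 0 ≤ Real.cos t) : 0 ≤ ggd t := by
  unfold ggd
  apply div_nonneg _ (pow_nonneg (rr_pos t).le 3)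
  have : (0:ℝ) ≤ 2 + Real.sin t ^ 2 := by positivity
  exact mul_nonneg (mul_nonneg hs hc) this

lemma BB_pos {t : ℝ} (h0 : 0 < t) (hpi : t ≤ π) : 0 < BB t := by
  rcases lt_or_ge t (π/2) with hlt | hge
  · -- monotonicity on [0, π/2]
    have hmono : StrictMonoOn BB (Icc 0 (π/2)) := by
      apply strictMonoOn_of_deriv_pos (convex_Icc _ _)
      · exact ((gg_cont.mul Real.continuous_sin).sub
          (xi_cont.mul Real.continuous_cos)).continuousOn
      · intro u hu
        rw [interior_Icc] at hu
        obtain ⟨hu1, hu2⟩ := hu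
        rw [(hasDerivAt_BB u).deriv]
        have hs : 0 < Real.sin u := Real.sin_pos_of_pos_of_lt_pi hu1
          (lt_trans hu2 (by linarith [Real.pi_pos]))
        have hxu : 0 < xi u := xi_pos hu1 (by linarith [Real.pi_pos])
        have hcu : 0 ≤ Real.cos u := Real.cos_nonneg_of_mem_Icc
          ⟨by linarith [Real.pi_pos], hu2.le⟩
        have := ggd_nonneg hs.le hcu
        positivity
    have := hmono (left_mem_Icc.2 (by linarith [Real.pi_pos])) ⟨h0.le, hlt.le⟩ h0
    rwa [BB_zero] at this
  · -- direct: cos t ≤ 0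
    have hxt : 0 < xi t := xi_pos h0 hpi
    have hs : 0 ≤ Real.sin t := Real.sin_nonneg_of_nonneg_of_le_pi h0.le hpi
    have hc : Real.cos t ≤ 0 := Real.cos_nonpos_of_pi_div_two_le_of_le hge
      (by linarith [Real.pi_pos])
    rcases lt_or_eq_of_le hc with hclt | hceq
    · have h1 : 0 ≤ gg t * Real.sin t := mul_nonneg (gg_nonneg t) hs
      have h2 : 0 < xi t * (- Real.cos t) := mul_pos hxt (by linarith)
      unfold BB; nlinarith
    · have hs2 : Real.sin t ^ 2 = 1 := by
        have := Real.sin_sq_add_cos_sq t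
        rw [hceq] at this
        nlinarith
      have hgg : 0 < gg t := by
        unfold gg
        have : (0:ℝ) < Real.sin t ^ 2 := by rw [hs2]; norm_num
        exact div_pos this (rr_pos t)
      have hs1 : 0 < Real.sin t := by nlinarith
      unfold BB
      rw [hceq, mul_zero, sub_zero]
      exact mul_pos hgg hs1

lemma R_ne_zero {t : ℝ} (hx : 0 < xi t) : R t ≠ 0 := by
  intro h
  have : (R t).im = 0 := by rw [h]; rfl
  simp [R] at this
  exact hx.ne' this

lemma beta_eq {t : ℝ} (hx : 0 < xi t) (hB : 0 < BB t) :
    betaAng 0 t = π/2 - Real.arctan (AA t / BB t) := by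
  have hD := R_ne_zero hx
  have hnsq : 0 < Complex.normSq (R t) := Complex.normSq_pos.2 hD
  have hre : (deriv R t).re = Real.cos t := by
    rw [deriv_R]; simp [-Complex.ofReal_cos]
  have him : (deriv R t).im = gg t := by
    rw [deriv_R]; simp [-Complex.ofReal_cos]
  have hDre : (R t).re = Real.sin t := by simp [R, -Complex.ofReal_sin]
  have hDim : (R t).im = xi t := by simp [R, -Complex.ofReal_sin]
  have hzim : (deriv R t / (R t - R 0)).im = BB t / Complex.normSq (R t) := by
    rw [R_zero, sub_zero, Complex.div_im, hre, him, hDre, hDim]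
    unfold BB
    ring
  have hzre : (deriv R t / (R t - R 0)).re = AA t / Complex.normSq (R t) := by
    rw [R_zero, sub_zero, Complex.div_re, hre, him, hDre, hDim]
    unfold AA
    ring
  have hzimpos : 0 < (deriv R t / (R t - R 0)).im := by
    rw [hzim]; exact div_pos hB hnsq
  rw [betaAng, arg_upper _ hzimpos, hzre, hzim]
  rw [div_div_div_cancel_right₀ hnsq.ne']

noncomputable def hh (t : ℝ) : ℝ :=
  2 * xi t + Real.sin t ^ 2 / xi t + Real.cos t * rr t / Real.sin t

lemma W_neg_eq_two_hh {t : ℝ} (hx : xi t ≠ 0) : W (-t) t = 2 * hh t := by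
  unfold W hh rr
  rw [xi_neg, Real.sin_neg, Real.cos_neg]
  rw [show Real.sin t - -Real.sin t = 2 * Real.sin t by ring,
      show xi t - -xi t = 2 * xi t by ring]
  rw [neg_sq]
  have h1 : (2 * Real.sin t) ^ 2 / (2 * xi t) = 2 * (Real.sin t ^ 2 / xi t) := by
    field_simp
  rw [h1]
  rw [div_neg]
  ring

lemma hasDerivAt_hh {t : ℝ} (hs : Real.sin t ≠ 0) (hx : xi t ≠ 0) :
    HasDerivAt hh (2 * Real.sin t * Real.cos t / xi t
      - Real.sin t ^ 4 / (xi t ^ 2 * rr t)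
      - Real.cos t ^ 2 * rr t / Real.sin t ^ 2) t := by
  have hsin2 : HasDerivAt (fun u => Real.sin u ^ 2) (2 * Real.sin t * Real.cos t) t := by
    have := (Real.hasDerivAt_sin t).pow 2
    refine this.congr_deriv ?_; ring
  have h1 : HasDerivAt (fun u => 2 * xi u) (2 * gg t) t := (hasDerivAt_xi t).const_mul 2
  have h2 : HasDerivAt (fun u => Real.sin u ^ 2 / xi u)
      ((2 * Real.sin t * Real.cos t * xi t - Real.sin t ^ 2 * gg t) / xi t ^ 2) t :=
    hsin2.div (hasDerivAt_xi t) hx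
  have hcr : HasDerivAt (fun u => Real.cos u * rr u)
      (- Real.sin t * rr t + Real.cos t * (Real.sin t * Real.cos t / rr t)) t :=
    (Real.hasDerivAt_cos t).mul (hasDerivAt_rr t)
  have h3 : HasDerivAt (fun u => Real.cos u * rr u / Real.sin u)
      (((- Real.sin t * rr t + Real.cos t * (Real.sin t * Real.cos t / rr t)) * Real.sin t
        - Real.cos t * rr t * Real.cos t) / Real.sin t ^ 2) t :=
    hcr.div (Real.hasDerivAt_sin t) hs
  have := (h1.add h2).add h3
  refine this.congr_deriv ?_
  symm
  unfold gg
  have hr := rr_sq t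
  have hr0 := (rr_pos t).ne'
  have hsc := Real.sin_sq_add_cos_sq t
  field_simp
  linear_combination (- Real.sin t ^ 4 * xi t ^ 5 * rr t ^ 3) * hsc
    + (Real.sin t ^ 4 * xi t ^ 5 * rr t ^ 3) * hr
    + ((1)*Real.sin t^2*xi t^2 + (-1)*Real.sin t^4*rr t^3*xi t^5) * hr
    + ((-1)*Real.sin t^2*xi t^2 + (1)*Real.sin t^4*rr t^3*xi t^5) * hsc

lemma hh_cont_at {t : ℝ} (hs : Real.sin t ≠ 0) (hx : xi t ≠ 0) : ContinuousAt hh t :=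
  (hasDerivAt_hh hs hx).differentiableAt.continuousAt

lemma hh_pos_left {t : ℝ} (h0 : 0 < t) (hle : t ≤ π/2) : 0 < hh t := by
  have hxt : 0 < xi t := xi_pos h0 (by linarith [Real.pi_pos])
  have hst : 0 < Real.sin t := Real.sin_pos_of_pos_of_lt_pi h0 (by linarith [Real.pi_pos])
  have hct : 0 ≤ Real.cos t := Real.cos_nonneg_of_mem_Icc ⟨by linarith [Real.pi_pos], hle⟩
  have h1 : 0 < Real.sin t ^ 2 / xi t := by positivity
  have h2 : 0 ≤ Real.cos t * rr t / Real.sin t :=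
    div_nonneg (mul_nonneg hct (rr_pos t).le) hst.le
  unfold hh
  linarith

lemma hh_anti : StrictAntiOn hh (Ico (π/2) π) := by
  have hpi := Real.pi_pos
  apply strictAntiOn_of_deriv_neg (convex_Ico _ _)
  · intro u hu
    have hs : Real.sin u ≠ 0 :=
      (Real.sin_pos_of_pos_of_lt_pi (by linarith [hu.1]) (lt_of_lt_of_le hu.2 le_rfl)).ne'
    have hx : xi u ≠ 0 := (xi_pos (by linarith [hu.1]) hu.2.le).ne'
    exact (hh_cont_at hs hx).continuousWithinAt
  · intro u hu
    rw [interior_Ico] at hu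
    obtain ⟨hu1, hu2⟩ := hu
    have hs : 0 < Real.sin u := Real.sin_pos_of_pos_of_lt_pi (by linarith) hu2
    have hx : 0 < xi u := xi_pos (by linarith) hu2.le
    have hc : Real.cos u < 0 := Real.cos_neg_of_pi_div_two_lt_of_lt hu1 (by linarith)
    rw [(hasDerivAt_hh hs.ne' hx.ne').deriv]
    have hA : 2 * Real.sin u * Real.cos u / xi u < 0 := by
      apply div_neg_of_neg_of_pos _ hx
      nlinarith
    have hB : 0 < Real.sin u ^ 4 / (xi u ^ 2 * rr u) := by
      have := rr_pos u
      positivity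
    have hC : 0 < Real.cos u ^ 2 * rr u / Real.sin u ^ 2 := by
      have hc2 : 0 < Real.cos u ^ 2 := by nlinarith
      exact div_pos (mul_pos hc2 (rr_pos u)) (pow_pos hs 2)
    linarith

-- the key algebraic identity for the numerator of β'
lemma numer_eq (t : ℝ) :
    AA t * (Real.sin t * (ggd t + xi t))
      - (Real.cos t ^ 2 - Real.sin t ^ 2 + ggd t * xi t + gg t ^ 2) * BB t
    = (Real.sin t ^ 3 + 2 * Real.sin t * xi t ^ 2
        + Real.cos t * rr t * xi t) / rr t ^ 3 := by
  unfold AA BB gg ggd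
  have hr := rr_sq t
  have hr0 := (rr_pos t).ne'
  have hsc := Real.sin_sq_add_cos_sq t
  field_simp
  linear_combination ((1)*Real.cos t*xi t*rr t^11 + (-1)*Real.sin t^2*Real.cos t*xi t*rr t^11 + (-1)*Real.sin t^3*rr t^10 + (1)*Real.sin t^3*xi t^2*rr t^10 + (2)*Real.sin t^5*rr t^10) * hr + ((1)*Real.cos t*xi t*rr t^13 + (2)*Real.sin t*xi t^2*rr t^10 + (2)*Real.sin t^3*rr t^10 + (-1)*Real.sin t^3*rr t^12 + (1)*Real.sin t^3*xi t^2*rr t^10 + (1)*Real.sin t^5*rr t^10) * hsc + ((1)*Real.cos t*rr t^2*xi t + (-1)*Real.cos t*rr t^11*xi t + (-1)*Real.sin t^2*Real.cos t*rr t^2*xi t + (1)*Real.sin t^2*Real.cos t*rr t^11*xi t + (-1)*Real.sin t^3*rr t + (1)*Real.sin t^3*rr t*xi t^2 + (1)*Real.sin t^3*rr t^10 + (-1)*Real.sin t^3*rr t^10*xi t^2 + (2)*Real.sin t^5*rr t + (-2)*Real.sin t^5*rr t^10) * hr + ((1)*Real.cos t*rr t^4*xi t + (-1)*Real.cos t*rr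 t^13*xi t + (2)*Real.sin t*rr t*xi t^2 + (-2)*Real.sin t*rr t^10*xi t^2 + (2)*Real.sin t^3*rr t + (1)*Real.sin t^3*rr t*xi t^2 + (-1)*Real.sin t^3*rr t^3 + (-2)*Real.sin t^3*rr t^10 + (-1)*Real.sin t^3*rr t^10*xi t^2 + (1)*Real.sin t^3*rr t^12 + (1)*Real.sin t^5*rr t + (-1)*Real.sin t^5*rr t^10) * hsc

lemma BB_cont : Continuous BB :=
  (gg_cont.mul Real.continuous_sin).sub (xi_cont.mul Real.continuous_cos)

lemma beta_eventuallyEq {t : ℝ} (hx : 0 < xi t) (hB : 0 < BB t) :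
    (fun u => betaAng 0 u) =ᶠ[nhds t] (fun u => π/2 - Real.arctan (AA u / BB u)) := by
  have h1 : ∀ᶠ u in nhds t, 0 < xi u :=
    (xi_cont.continuousAt).eventually (eventually_gt_nhds hx)
  have h2 : ∀ᶠ u in nhds t, 0 < BB u :=
    (BB_cont.continuousAt).eventually (eventually_gt_nhds hB)
  filter_upwards [h1, h2] with u hu1 hu2
  exact beta_eq hu1 hu2

lemma beta_contAt {t : ℝ} (hx : 0 < xi t) (hB : 0 < BB t) :
    ContinuousAt (fun u => betaAng 0 u) t := by
  have hφ : ContinuousAt (fun u => π/2 - Real.arctan (AA u / BB u)) t := by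
    apply ContinuousAt.sub continuousAt_const
    apply Real.continuous_arctan.continuousAt.comp
    apply ContinuousAt.div
    · exact ((Real.continuous_cos.mul Real.continuous_sin).add
        (gg_cont.mul xi_cont)).continuousAt
    · exact BB_cont.continuousAt
    · exact hB.ne'
  exact hφ.congr (beta_eventuallyEq hx hB).symm

lemma sxh_eq {t : ℝ} (hs : Real.sin t ≠ 0) (hx : xi t ≠ 0) :
    Real.sin t * xi t * hh t
      = Real.sin t ^ 3 + 2 * Real.sin t * xi t ^ 2 + Real.cos t * rr t * xi t := by
  unfold hh
  field_simp
  ring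

lemma hasDerivAt_beta {t : ℝ} (h0 : 0 < t) (hpi : t < π) :
    HasDerivAt (fun u => betaAng 0 u)
      ((Real.sin t * xi t * hh t / rr t ^ 3) / (AA t ^ 2 + BB t ^ 2)) t := by
  have hx : 0 < xi t := xi_pos h0 hpi.le
  have hB : 0 < BB t := BB_pos h0 hpi.le
  have hs : 0 < Real.sin t := Real.sin_pos_of_pos_of_lt_pi h0 hpi
  have hq : HasDerivAt (fun u => AA u / BB u)
      (((Real.cos t ^ 2 - Real.sin t ^ 2 + ggd t * xi t + gg t ^ 2) * BB t
        - AA t * (Real.sin t * (ggd t + xi t))) / BB t ^ 2) t :=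
    (hasDerivAt_AA t).div (hasDerivAt_BB t) hB.ne'
  have harc := hq.arctan
  have hφ := harc.const_sub (π/2)
  have hev := (beta_eventuallyEq hx hB).symm
  have hder := hφ.congr_of_eventuallyEq hev.symm
  refine hder.congr_deriv ?_
  symm
  have hnum := numer_eq t
  have hsxh := sxh_eq hs.ne' hx.ne'
  rw [← hsxh] at hnum
  rw [← hnum]
  have hq2 : (0:ℝ) < 1 + (AA t / BB t) ^ 2 := by positivity
  field_simp
  ring

theorem beta_monotonicity (tstar : ℝ) (h1 : tstar ∈ Ioo (π/2) π)
    (h2 : W (-tstar) tstar = 0) :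
    StrictMonoOn (fun t => betaAng 0 t) (Ioc 0 tstar) ∧
    StrictAntiOn (fun t => betaAng 0 t) (Icc tstar π) ∧
    betaAng 0 tstar > π/2 ∧
    betaAng 0 π = π/2 ∧
    (∃! tb : ℝ, tb ∈ Ioo 0 tstar ∧ betaAng 0 tb = π/2 ∧
      (∀ t : ℝ, 0 < t → t < tb → betaAng 0 t < π/2) ∧
      (∀ t : ℝ, tb < t → t < π → betaAng 0 t > π/2)) := by
  have hpi := Real.pi_pos
  obtain ⟨hts1, hts2⟩ := h1
  have hts0 : 0 < tstar := by linarith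
  -- hh tstar = 0
  have hxts : 0 < xi tstar := xi_pos hts0 hts2.le
  have hhts : hh tstar = 0 := by
    have := W_neg_eq_two_hh hxts.ne'
    rw [h2] at this
    linarith
  -- hh sign
  have hh_pos' : ∀ t, 0 < t → t < tstar → 0 < hh t := by
    intro t ht htlt
    rcases le_or_gt t (π/2) with hle | hgt
    · exact hh_pos_left ht hle
    · have := hh_anti ⟨hgt.le, by linarith⟩ ⟨hts1.le, hts2⟩ htlt
      linarith [hhts ▸ this]
  have hh_neg' : ∀ t, tstar < t → t < π → hh t < 0 := by
    intro t htgt htpi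
    have := hh_anti ⟨hts1.le, hts2⟩ ⟨by linarith, htpi⟩ htgt
    linarith [hhts ▸ this]
  -- derivative sign
  have deriv_val : ∀ t, 0 < t → t < π → deriv (fun u => betaAng 0 u) t
      = (Real.sin t * xi t * hh t / rr t ^ 3) / (AA t ^ 2 + BB t ^ 2) := fun t a b =>
    (hasDerivAt_beta a b).deriv
  have hABpos : ∀ t, 0 < t → t ≤ π → 0 < AA t ^ 2 + BB t ^ 2 := by
    intro t a b
    have := BB_pos a b
    positivity
  have deriv_pos : ∀ t ∈ Ioo (0:ℝ) tstar, 0 < deriv (fun u => betaAng 0 u) t := by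
    intro t ht
    rw [deriv_val t ht.1 (by linarith [ht.2])]
    have hs : 0 < Real.sin t := Real.sin_pos_of_pos_of_lt_pi ht.1 (by linarith [ht.2])
    have hx : 0 < xi t := xi_pos ht.1 (by linarith [ht.2])
    have hht := hh_pos' t ht.1 ht.2
    have hr := rr_pos t
    have := hABpos t ht.1 (by linarith [ht.2])
    positivity
  have deriv_neg : ∀ t ∈ Ioo tstar π, deriv (fun u => betaAng 0 u) t < 0 := by
    intro t ht
    rw [deriv_val t (by linarith [ht.1]) ht.2]
    have hs : 0 < Real.sin t := Real.sin_pos_of_pos_of_lt_pi (by linarith [ht.1]) ht.2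
    have hx : 0 < xi t := xi_pos (by linarith [ht.1]) ht.2.le
    have hht := hh_neg' t ht.1 ht.2
    have hr := rr_pos t
    have hAB := hABpos t (by linarith [ht.1]) ht.2.le
    apply div_neg_of_neg_of_pos _ hAB
    apply div_neg_of_neg_of_pos _ (by positivity)
    exact mul_neg_of_pos_of_neg (mul_pos hs hx) hht
  -- continuity
  have contAt : ∀ t, 0 < t → t ≤ π → ContinuousAt (fun u => betaAng 0 u) t := by
    intro t a b
    exact beta_contAt (xi_pos a b) (BB_pos a b)
  -- strict mono on Ioc 0 tstar
  have hmono : StrictMonoOn (fun t => betaAng 0 t) (Ioc 0 tstar) := by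
    apply strictMonoOn_of_deriv_pos (convex_Ioc _ _)
    · exact fun t ht => (contAt t ht.1 (le_trans ht.2 hts2.le)).continuousWithinAt
    · intro t ht
      rw [interior_Ioc] at ht
      exact deriv_pos t ht
  -- strict anti on Icc tstar π
  have hanti : StrictAntiOn (fun t => betaAng 0 t) (Icc tstar π) := by
    apply strictAntiOn_of_deriv_neg (convex_Icc _ _)
    · exact fun t ht => (contAt t (by linarith [ht.1]) ht.2).continuousWithinAt
    · intro t ht
      rw [interior_Icc] at ht
      exact deriv_neg t ht
  -- beta at π
  have hbpi : betaAng 0 π = π/2 := by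
    have hx : 0 < xi π := xi_pos hpi le_rfl
    have hB : 0 < BB π := BB_pos hpi le_rfl
    rw [beta_eq hx hB]
    have hA : AA π = 0 := by simp [AA, gg, Real.sin_pi]
    rw [hA]
    simp [Real.arctan_zero]
  -- beta at tstar
  have hbts : betaAng 0 tstar > π/2 := by
    have h := hanti ⟨le_rfl, hts2.le⟩ ⟨hts2.le, le_rfl⟩ hts2
    have h2 : betaAng 0 π < betaAng 0 tstar := h
    rw [hbpi] at h2
    exact h2
  -- beta at π/2 is < π/2
  have hbhalf : betaAng 0 (π/2) < π/2 := by
    have hx : 0 < xi (π/2) := xi_pos (by linarith) (by linarith)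
    have hB : 0 < BB (π/2) := BB_pos (by linarith) (by linarith)
    rw [beta_eq hx hB]
    have hA : 0 < AA (π/2) := by
      have hgg : 0 < gg (π/2) := by
        unfold gg
        rw [Real.sin_pi_div_two]
        exact div_pos (by norm_num) (rr_pos _)
      have : AA (π/2) = gg (π/2) * xi (π/2) := by
        simp [AA, Real.cos_pi_div_two]
      rw [this]
      positivity
    have : 0 < Real.arctan (AA (π/2) / BB (π/2)) := by
      have := Real.arctan_strictMono (div_pos hA hB)
      rwa [Real.arctan_zero] at this
    linarith
  refine ⟨hmono, hanti, hbts, hbpi, ?_⟩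
  -- existence of tb via IVT on [π/2, tstar]
  have hconn : ContinuousOn (fun t => betaAng 0 t) (Icc (π/2) tstar) :=
    fun t ht => (contAt t (by linarith [ht.1]) (le_trans ht.2 hts2.le)).continuousWithinAt
  have hIVT := intermediate_value_Ioo hts1.le hconn
  have hmem : π/2 ∈ Ioo (betaAng 0 (π/2)) (betaAng 0 tstar) := ⟨hbhalf, hbts⟩
  obtain ⟨tb, htb, hbeq⟩ := hIVT hmem
  have hbeq : betaAng 0 tb = π/2 := hbeq
  have htb0 : 0 < tb := by linarith [htb.1]
  have htbmem : tb ∈ Ioc (0:ℝ) tstar := ⟨htb0, htb.2.le⟩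
  refine ⟨tb, ⟨⟨htb0, htb.2⟩, hbeq, ?_, ?_⟩, ?_⟩
  · intro t ht htlt
    have h := hmono ⟨ht, le_trans htlt.le htb.2.le⟩ htbmem htlt
    have h' : betaAng 0 t < betaAng 0 tb := h
    rwa [hbeq] at h'
  · intro t htgt htpi
    rcases le_or_gt t tstar with hle | hgt
    · have h := hmono htbmem ⟨by linarith, hle⟩ htgt
      have h' : betaAng 0 tb < betaAng 0 t := h
      rwa [hbeq] at h'
    · have h := hanti ⟨hgt.le, htpi.le⟩ ⟨hts2.le, le_rfl⟩ htpi
      have h' : betaAng 0 π < betaAng 0 t := h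
      rwa [hbpi] at h'
  · rintro y ⟨hy1, hy2, -, -⟩
    exact hmono.injOn ⟨hy1.1, hy1.2.le⟩ htbmem (hy2.trans hbeq.symm)
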